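/- arXiv:1911.12035 — 4 statements merged into one kernel-verified Lean document; each statement's English description precedes it below -/
import Mathlib

section
/- Let td denote the formal power series in ℚ[[u]] uniquely determined by the equation td · (1 − e^{−u}) = u (equivalently, td = ∑_{n≥0} B'_n u^n/n!, where B'_n are the Bernoulli numbers with the convention B'_1 = 1/2, i.e. Mathlib's bernoulli'PowerSeries over ℚ). Then for every natural number n, the coefficient of u^n in the power series td^{n+1} equals 1. -/
open PowerSeries

/-- The Todd power series `td = u / (1 - e^{-u})`, characterized by
`td * (1 - e^{-u}) = u` (equivalently `td = bernoulli'PowerSeries ℚ`),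
has the property that for every `n` the coefficient of `u^n` in `td^(n+1)` is `1`. -/
theorem todd_coeff_pow_succ (td : PowerSeries ℚ)
    (htd : td * (1 - rescale (-1) (exp ℚ)) = X) :
    ∀ n : ℕ, coeff n (td ^ (n + 1)) = 1 := by
  set E : PowerSeries ℚ := rescale (-1) (exp ℚ) with hE
  -- derivative of E is -E
  have hDE : d⁄dX ℚ E = -E := by
    ext n
    rw [coeff_derivative, hE, map_neg, coeff_rescale, coeff_rescale, coeff_exp, coeff_exp]
    have h1 : ((n + 1).factorial : ℚ) = (n + 1) * (n.factorial : ℚ) := by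
      rw [Nat.factorial_succ]; push_cast; ring
    have h2 : (n.factorial : ℚ) ≠ 0 := by exact_mod_cast Nat.factorial_ne_zero n
    have h3 : ((n : ℚ) + 1) ≠ 0 := by positivity
    simp only [eq_ratCast, Rat.cast_div, Rat.cast_one, Rat.cast_natCast]
    push_cast [h1, pow_succ]
    field_simp
  -- constant coefficient of td is 1
  have hcoe0E : coeff 0 E = 1 := by simp [hE, coeff_rescale, coeff_exp]
  have hcoe1E : coeff 1 E = -1 := by simp [hE, coeff_rescale, coeff_exp]
  have h0 : coeff 0 td = 1 := by
    have h := congrArg (coeff 1) htd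
    rw [coeff_mul, Finset.Nat.sum_antidiagonal_eq_sum_range_succ_mk,
      Finset.sum_range_succ, Finset.sum_range_one, coeff_X] at h
    simp only [map_sub, coeff_one, hcoe0E, hcoe1E] at h
    norm_num at h
    exact (coeff_zero_eq_constantCoeff (R := ℚ)).symm ▸ h
  -- the key differential equation
  have hstar : X * d⁄dX ℚ td = td - td ^ 2 + X * td := by
    have h1 := congrArg (d⁄dX ℚ) htd
    rw [Derivation.leibniz, derivative_X] at h1
    have hDg : d⁄dX ℚ (1 - E) = E := by
      have : (1 : PowerSeries ℚ) - E = 1 + (-1 : ℚ) • E := by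
        rw [neg_one_smul]; ring
      rw [this, map_add, Derivation.map_smul, hDE]
      simp
    rw [hDg] at h1
    simp only [smul_eq_mul] at h1
    -- h1 : td * E + (1 - E) * d⁄dX ℚ td = 1
    linear_combination (td - d⁄dX ℚ td) * htd + td * h1
  -- powers
  have hpow : ∀ m : ℕ, X * d⁄dX ℚ (td ^ (m + 1)) =
      ((m : PowerSeries ℚ) + 1) * (td ^ (m + 1) - td ^ (m + 2) + X * td ^ (m + 1)) := by
    intro m
    rw [Derivation.leibniz_pow]
    simp only [Nat.add_sub_cancel, smul_eq_mul, nsmul_eq_mul]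
    push_cast
    linear_combination ((m : PowerSeries ℚ) + 1) * td ^ m * hstar
  -- coefficient recursion
  have key : ∀ n : ℕ, coeff (n + 1) (td ^ (n + 2)) = coeff n (td ^ (n + 1)) := by
    intro n
    have h := congrArg (coeff (n + 1)) (hpow n)
    rw [coeff_succ_X_mul, coeff_derivative] at h
    have hmul : coeff (n + 1) (((n : PowerSeries ℚ) + 1) *
        (td ^ (n + 1) - td ^ (n + 2) + X * td ^ (n + 1)))
        = ((n : ℚ) + 1) * (coeff (n + 1) (td ^ (n + 1)) - coeff (n + 1) (td ^ (n + 2))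
            + coeff n (td ^ (n + 1))) := by
      have : ((n : PowerSeries ℚ) + 1) = C ((n : ℚ) + 1) := by
        simp [map_add, map_natCast]
      rw [this, coeff_C_mul, map_add, map_sub, coeff_succ_X_mul]
    rw [hmul] at h
    have h3 : ((n : ℚ) + 1) ≠ 0 := by positivity
    apply mul_left_cancel₀ h3
    linear_combination h
  -- conclude by induction
  intro n
  induction n with
  | zero => simpa using h0
  | succ n ih => rw [key n]; exact ih
end

section
/- Let f ∈ ℚ[[u]] be a formal power series such that for every natural number n the coefficient of u^n in f^{n+1} equals 1. Then f · (1 − e^{−u}) = u; that is, f is the Todd power series u/(1 − e^{−u}) = ∑_{n≥0} B'_n u^n/n! (Mathlib's bernoulli'PowerSeries over ℚ). -/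
open PowerSeries

noncomputable def Eneg : PowerSeries ℚ := rescale (-1) (exp ℚ)

lemma exp_mul_Eneg : exp ℚ * Eneg = 1 := exp_mul_exp_neg_eq_one

lemma derivative_Eneg : d⁄dX ℚ Eneg = -Eneg := by
  ext n
  simp only [coeff_derivative, Eneg, coeff_rescale, coeff_exp, map_neg, coeff_exp,
    Algebra.algebraMap_self, RingHom.id_apply, Nat.factorial_succ]
  push_cast
  rw [pow_succ]
  have h1 : ((n:ℚ)+1) ≠ 0 := by positivity
  have h2 : ((n.factorial : ℚ)) ≠ 0 := by exact_mod_cast Nat.factorial_ne_zero n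
  field_simp

noncomputable def B : PowerSeries ℚ := bernoulli'PowerSeries ℚ

lemma B_mul_g : B * (1 - Eneg) = X := by
  have h1 : (exp ℚ - 1) * Eneg = 1 - Eneg := by
    rw [sub_mul, exp_mul_Eneg, one_mul]
  calc B * (1 - Eneg) = B * (exp ℚ - 1) * Eneg := by rw [mul_assoc, h1]
    _ = X * exp ℚ * Eneg := by rw [B, bernoulli'PowerSeries_mul_exp_sub_one]
    _ = X := by rw [mul_assoc, exp_mul_Eneg, mul_one]

lemma X_mul_dB : X * d⁄dX ℚ B = B + X * B - B ^ 2 := by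
  have hg : d⁄dX ℚ (1 - Eneg) = 1 - (1 - Eneg) := by
    rw [map_sub, derivative_Eneg]; simp
  have h := congrArg (d⁄dX ℚ) B_mul_g
  rw [Derivation.leibniz, smul_eq_mul, smul_eq_mul, hg, derivative_X] at h
  -- h : d B * (1 - Eneg)? check orientation
  linear_combination B * h + (B - d⁄dX ℚ B) * B_mul_g

lemma coeff_B_zero : coeff 0 B = 1 := by
  simp [B, bernoulli'PowerSeries, bernoulli'_zero]

lemma key_rec (n : ℕ) : coeff (n+1) (B ^ (n+2)) = coeff n (B ^ (n+1)) := by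
  have h : X * d⁄dX ℚ (B ^ (n+1)) =
      ((n:ℚ)+1) • (B^(n+1) + X * B^(n+1) - B^(n+2)) := by
    rw [Derivation.leibniz_pow, Nat.add_sub_cancel, nsmul_eq_mul, smul_eq_mul,
      smul_eq_C_mul]
    push_cast
    simp only [map_add, map_one, map_natCast]
    linear_combination ((n:ℚ⟦X⟧)+1) * B^n * X_mul_dB
  have h2 := congrArg (coeff (n+1)) h
  rw [coeff_succ_X_mul, coeff_derivative, map_smul, map_sub, map_add,
    coeff_succ_X_mul] at h2
  have hne : ((n:ℚ)+1) ≠ 0 := by positivity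
  have := h2
  rw [smul_eq_mul] at this
  field_simp [smul_eq_mul] at this
  nlinarith [this]

lemma coeff_B_pow (n : ℕ) : coeff n (B ^ (n+1)) = 1 := by
  induction n with
  | zero => simpa using coeff_B_zero
  | succ k ih => rw [key_rec k]; exact ih

lemma f_eq_B (f : PowerSeries ℚ) (hf : ∀ n : ℕ, coeff n (f ^ (n + 1)) = 1) :
    f = B := by
  have hc0f : constantCoeff f = 1 := by simpa using hf 0
  have hc0B : constantCoeff B = 1 := by
    rw [← coeff_zero_eq_constantCoeff]; exact coeff_B_zero
  ext n
  induction n using Nat.strong_induction_on with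
  | _ n ih =>
    have hgeom := geom_sum₂_mul f B (n+1)
    have h0 := congrArg (coeff n) hgeom
    rw [map_sub, hf n, coeff_B_pow n, sub_self, coeff_mul] at h0
    rw [Finset.sum_eq_single (0, n)] at h0
    · have hS : coeff 0 (∑ i ∈ Finset.range (n+1), f^i * B^(n+1-1-i))
          = ((n:ℚ)+1) := by
        rw [map_sum]
        have hterm : ∀ i ∈ Finset.range (n+1),
            coeff 0 (f^i * B^(n+1-1-i)) = 1 := by
          intro i _
          rw [coeff_zero_eq_constantCoeff, map_mul, map_pow, map_pow, hc0f,
            hc0B, one_pow, one_pow, one_mul]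
        rw [Finset.sum_congr rfl hterm, Finset.sum_const, Finset.card_range]
        simp
      rw [hS, map_sub] at h0
      have hne : ((n:ℚ)+1) ≠ 0 := by positivity
      have := mul_eq_zero.mp h0
      rcases this with h | h
      · exact absurd h hne
      · linarith [h]
    · intro p hp hne
      have hps := Finset.HasAntidiagonal.mem_antidiagonal.mp hp
      have hlt : p.2 < n := by
        rcases lt_or_eq_of_le (show p.2 ≤ n by omega) with h | h
        · exact h
        · exfalso; apply hne
          have h1 : p.1 = 0 := by omega
          exact Prod.ext h1 h
      rw [map_sub, ih p.2 hlt, sub_self, mul_zero]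
    · intro h
      exact absurd (Finset.HasAntidiagonal.mem_antidiagonal.mpr (by simp)) h

/-- If `f ∈ ℚ[[u]]` satisfies `coeff_{u^n} (f^(n+1)) = 1` for every `n`, then
`f * (1 - e^{-u}) = u`, i.e. `f` is the Todd power series `u / (1 - e^{-u})`,
which is Mathlib's `bernoulli'PowerSeries ℚ`. -/
theorem todd_unique (f : PowerSeries ℚ)
    (hf : ∀ n : ℕ, coeff n (f ^ (n + 1)) = 1) :
    f * (1 - rescale (-1) (exp ℚ)) = X ∧ f = bernoulli'PowerSeries ℚ := by
  have hfB := f_eq_B f hf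
  constructor
  · rw [hfB]; exact B_mul_g
  · rw [hfB]; rfl
end

section
/- Let f ∈ ℚ[[u]] be a formal power series with constant coefficient 1 such that for every integer n, rescaling f by n equals f^n (i.e. f(n·u) = f(u)^n as formal power series). Then f = e^{c·u}, the exponential series rescaled by c = the coefficient of u in f; that is, f equals the power series ∑_{k≥0} c^k u^k/k!. -/
open PowerSeries

private lemma rescale_two_sq_unique (p q : PowerSeries ℚ)
    (hp : rescale 2 p = p ^ 2) (hq : rescale 2 q = q ^ 2)
    (h0p : constantCoeff p = 1) (h0q : constantCoeff q = 1)
    (h1 : coeff 1 p = coeff 1 q) : p = q := by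
  ext k
  induction k using Nat.strong_induction_on with
  | _ k ih =>
    match k with
    | 0 => simpa using h0p.trans h0q.symm
    | 1 => exact h1
    | (k+2) =>
      have hmem1 : ((0:ℕ), k+2) ∈ Finset.HasAntidiagonal.antidiagonal (k+2) := by simp
      have hmem2 : ((k+2:ℕ), 0) ∈ (Finset.HasAntidiagonal.antidiagonal (k+2)).erase (0, k+2) := by simp
      have key : ∀ r : PowerSeries ℚ, rescale 2 r = r ^ 2 → constantCoeff r = 1 →
          ((2:ℚ)^(k+2) - 2) * coeff (k+2) r =
            ∑ x ∈ ((Finset.HasAntidiagonal.antidiagonal (k+2)).erase (0, k+2)).erase (k+2, 0),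
              coeff x.1 r * coeff x.2 r := by
        intro r hr h0r
        have e := congrArg (coeff (k+2)) hr
        rw [coeff_rescale, sq, coeff_mul, ← Finset.add_sum_erase _ _ hmem1,
          ← Finset.add_sum_erase _ _ hmem2] at e
        simp only [coeff_zero_eq_constantCoeff, h0r, one_mul, mul_one] at e
        linarith
      have hsum :
          (∑ x ∈ ((Finset.HasAntidiagonal.antidiagonal (k+2)).erase (0, k+2)).erase (k+2, 0),
              coeff x.1 p * coeff x.2 p) =
          ∑ x ∈ ((Finset.HasAntidiagonal.antidiagonal (k+2)).erase (0, k+2)).erase (k+2, 0),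
              coeff x.1 q * coeff x.2 q := by
        refine Finset.sum_congr rfl ?_
        rintro ⟨i, j⟩ hx
        rw [Finset.mem_erase, Finset.mem_erase, Finset.HasAntidiagonal.mem_antidiagonal] at hx
        obtain ⟨hne1, hne2, hsum⟩ := hx
        have hi : ¬(i = k+2 ∧ j = 0) := fun ⟨a, b⟩ => hne1 (by simp [a, b])
        have hj : ¬(i = 0 ∧ j = k+2) := fun ⟨a, b⟩ => hne2 (by simp [a, b])
        rw [ih i (by omega), ih j (by omega)]
      have ep := key p hp h0p
      have eq' := key q hq h0q
      rw [hsum] at ep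
      have hne : ((2:ℚ)^(k+2) - 2) ≠ 0 := by
        have : (1:ℚ) ≤ 2 ^ k := one_le_pow₀ (by norm_num)
        rw [pow_succ, pow_succ]
        nlinarith
      have := ep.trans eq'.symm
      exact mul_left_cancel₀ hne this

/-- If `f ∈ ℚ[[u]]` has constant coefficient `1` (so `f` is a unit `U`) and
satisfies `f(n·u) = f(u)^n` for every integer `n`, then `f = e^{c·u}` where
`c` is the coefficient of `u` in `f`, i.e. `f` is the exponential series
rescaled by `c`. -/
theorem exp_of_rescale_int_pow (f : PowerSeries ℚ) (U : (PowerSeries ℚ)ˣ)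
    (hU : (U : PowerSeries ℚ) = f)
    (h1 : constantCoeff f = 1)
    (h : ∀ n : ℤ, rescale (n : ℚ) f = ((U ^ n : (PowerSeries ℚ)ˣ) : PowerSeries ℚ)) :
    f = rescale (coeff 1 f) (exp ℚ) := by
  set c := coeff 1 f with hc
  have hp : rescale 2 f = f ^ 2 := by
    have h2 := h 2
    rw [show ((2:ℤ):ℚ) = 2 by norm_num] at h2
    rw [h2, show ((2:ℤ)) = ((2:ℕ):ℤ) by rfl, zpow_natCast, Units.val_pow_eq_pow_val, hU]
  have hq : rescale 2 (rescale c (exp ℚ)) = (rescale c (exp ℚ)) ^ 2 := by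
    rw [rescale_rescale, sq, exp_mul_exp_eq_exp_add]
    ring_nf
  refine rescale_two_sq_unique _ _ hp hq h1 ?_ ?_
  · simp [← coeff_zero_eq_constantCoeff_apply, coeff_rescale, coeff_exp]
  · simp [coeff_rescale, coeff_exp, hc]
end

section
/- Let f ∈ ℚ[[u]] be a formal power series with constant coefficient 1 and coefficient of u equal to 1, such that for every integer n, rescaling f by n equals f^n (i.e. f(n·u) = f(u)^n as formal power series). Then f is the exponential series: f = ∑_{k≥0} u^k/k!. -/
open PowerSeries Finset

/-- If `f ∈ ℚ[[u]]` has constant coefficient `1` and coefficient of `u` equal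
to `1` (so `f` is a unit `U`), and satisfies `f(n·u) = f(u)^n` for every
integer `n`, then `f` is the exponential series `∑_{k≥0} u^k / k!`. -/
theorem eq_exp_of_rescale_int_pow (f : PowerSeries ℚ) (U : (PowerSeries ℚ)ˣ)
    (hU : (U : PowerSeries ℚ) = f)
    (h0 : constantCoeff f = 1)
    (h1 : coeff 1 f = 1)
    (h : ∀ n : ℤ, rescale (n : ℚ) f = ((U ^ n : (PowerSeries ℚ)ˣ) : PowerSeries ℚ)) :
    f = exp ℚ := by
  have h2 : rescale (2 : ℚ) f = f * f := by
    have hh := h 2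
    rw [show ((2:ℤ) : ℚ) = 2 by norm_num] at hh
    rw [hh, show (U ^ (2:ℤ)) = U ^ (2:ℕ) by norm_cast]
    push_cast [hU]
    ring
  have hexp2 : rescale (2 : ℚ) (exp ℚ) = exp ℚ * exp ℚ := by
    have he := exp_pow_eq_rescale_exp (A := ℚ) 2
    rw [show ((2:ℕ):ℚ) = 2 by norm_num] at he
    rw [← he]
    ring
  suffices hcoeff : ∀ k, coeff k f = coeff k (exp ℚ) by
    ext k; exact hcoeff k
  intro k
  induction k using Nat.strong_induction_on with
  | _ k ih =>
    rcases Nat.lt_or_ge k 2 with hk | hk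
    · interval_cases k
      · simp [h0]
      · simp [h1, coeff_exp]
    · have h2k : ((2:ℚ)^k - 2) ≠ 0 := by
        have h4 : (4:ℚ) ≤ 2^k := by
          calc (4:ℚ) = 2^2 := by norm_num
          _ ≤ 2^k := pow_le_pow_right₀ (by norm_num) hk
        linarith
      have Ha : (2:ℚ)^k * coeff k f
          = ∑ i ∈ range (k+1), coeff i f * coeff (k-i) f := by
        have := congrArg (coeff k) h2
        rwa [coeff_rescale, coeff_mul,
          Finset.Nat.sum_antidiagonal_eq_sum_range_succ_mk] at this
      have He : (2:ℚ)^k * coeff k (exp ℚ)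
          = ∑ i ∈ range (k+1), coeff i (exp ℚ) * coeff (k-i) (exp ℚ) := by
        have := congrArg (coeff k) hexp2
        rwa [coeff_rescale, coeff_mul,
          Finset.Nat.sum_antidiagonal_eq_sum_range_succ_mk] at this
      have split : ∀ g : ℕ → ℚ,
          ∑ i ∈ range (k+1), g i = g 0 + (∑ i ∈ Ico 1 k, g i) + g k := by
        intro g
        rw [Finset.sum_range_succ, Finset.range_eq_Ico,
          Finset.sum_eq_sum_Ico_succ_bot (by omega)]
      have mid : ∑ i ∈ Ico 1 k, coeff i f * coeff (k-i) f
          = ∑ i ∈ Ico 1 k, coeff i (exp ℚ) * coeff (k-i) (exp ℚ) := by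
        refine Finset.sum_congr rfl fun i hi => ?_
        simp only [Finset.mem_Ico] at hi
        rw [ih i (by omega), ih (k-i) (by omega)]
      have ha0 : coeff 0 f = 1 := by simpa using h0
      have he0 : coeff 0 (exp ℚ) = 1 := by simp [coeff_exp]
      rw [split] at Ha He
      simp only [Nat.sub_zero, Nat.sub_self] at Ha He
      rw [ha0, mid] at Ha
      rw [he0] at He
      have key : ((2:ℚ)^k - 2) * coeff k f = ((2:ℚ)^k - 2) * coeff k (exp ℚ) := by
        linarith
      exact mul_left_cancel₀ h2k key
end
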